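/- Let Φ be a finite crystallographic root system with a choice of positive roots Φ⁺. Suppose α₁ ∈ Φ ∪ {0}, α₂, …, α_k ∈ Φ⁺, and γ := α₁ + ⋯ + α_k ∈ Φ ∪ {0}. Then there is a permutation σ of {2, …, k} such that every partial sum α₁ + α_{σ(2)} + ⋯ + α_{σ(j)} lies in Φ ∪ {0} for all 1 ≤ j ≤ k. -/

import Mathlib

open RealInnerProductSpace
open scoped Classical

variable {V : Type*} [NormedAddCommGroup V] [InnerProductSpace ℝ V] [FiniteDimensional ℝ V]

/-- A finite crystallographic root system in the real inner product space `V`. -/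
structure IsRootSystem (Φ : Set V) : Prop where
  finite : Φ.Finite
  nonzero : (0 : V) ∉ Φ
  spanning : Submodule.span ℝ Φ = ⊤
  reflect_mem : ∀ α ∈ Φ, ∀ β ∈ Φ, β - (2 * ⟪β, α⟫ / ⟪α, α⟫) • α ∈ Φ
  crystallographic : ∀ α ∈ Φ, ∀ β ∈ Φ, ∃ n : ℤ, 2 * ⟪β, α⟫ / ⟪α, α⟫ = (n : ℝ)

/-- `Pos` is a system of positive roots for `Φ`: the roots on the positive side of a
generic linear functional. -/
def IsPositiveSystem (Φ Pos : Set V) : Prop :=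
  ∃ f : V →ₗ[ℝ] ℝ, (∀ α ∈ Φ, f α ≠ 0) ∧ Pos = {α ∈ Φ | 0 < f α}

/-- Irreducibility of a root system: no splitting into two nonempty orthogonal parts. -/
def IsIrreducibleRootSystem (Φ : Set V) : Prop :=
  Φ.Nonempty ∧ ∀ Φ₁ Φ₂ : Set V, Φ = Φ₁ ∪ Φ₂ →
    (∀ α ∈ Φ₁, ∀ β ∈ Φ₂, ⟪α, β⟫ = 0) → Φ₁ = ∅ ∨ Φ₂ = ∅

/-- A simple root: a positive root that is not the sum of two positive roots. -/
def IsSimpleRoot (Pos : Set V) (α : V) : Prop :=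
  α ∈ Pos ∧ ∀ β ∈ Pos, ∀ γ ∈ Pos, α ≠ β + γ

/-- An upper order ideal of the positive roots. -/
def IsUpperIdeal (Pos I : Set V) : Prop :=
  I ⊆ Pos ∧ ∀ α ∈ I, ∀ β ∈ Pos, α + β ∈ Pos → α + β ∈ I

/-- `γ` is a sum of `k` elements of `S`. -/
def IsSumOf (S : Set V) (k : ℕ) (γ : V) : Prop :=
  ∃ f : Fin k → V, (∀ i, f i ∈ S) ∧ ∑ i, f i = γ

/-- The standard partial order on roots: `α ≼ γ` iff `γ - α` is a (possibly empty)
sum of positive roots. -/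
def RootLE (Pos : Set V) (α γ : V) : Prop := ∃ k, IsSumOf Pos k (γ - α)

/-- The set of minimal roots of an ideal `I`. -/
def minimalRoots (Pos I : Set V) : Set V :=
  {α | α ∈ I ∧ ∀ β ∈ I, RootLE Pos β α → β = α}

/-- `γ_{I,+}`: the maximal number of summands in a decomposition of `γ` as a sum of
elements of `I` (with junk value `0` if no decomposition exists). -/
noncomputable def aPlus (I : Set V) (γ : V) : ℕ := sSup {k | IsSumOf I k γ}

/-- `γ_{I,-}`: the minimal `k` such that `γ` is a sum of `k + 1` elements of
`Pos \ I`. -/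
noncomputable def aMinus (Pos I : Set V) (γ : V) : ℕ := sInf {k | IsSumOf (Pos \ I) (k + 1) γ}

/-- The height of a positive root: the number of summands when written as a sum of
simple roots. -/
noncomputable def rootHeight (Pos : Set V) (γ : V) : ℕ :=
  sSup {k | IsSumOf {α | IsSimpleRoot Pos α} k γ}

lemma inner_self_pos' {x : V} (hx : x ≠ 0) : 0 < ⟪x, x⟫ :=
  real_inner_self_nonneg.lt_of_ne (fun h => hx (inner_self_eq_zero.mp h.symm))

lemma RS.neg_mem {Φ : Set V} (hΦ : IsRootSystem Φ) {α : V} (hα : α ∈ Φ) : -α ∈ Φ := by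
  have hα0 : α ≠ 0 := fun h => hΦ.nonzero (h ▸ hα)
  have hne : ⟪α, α⟫ ≠ 0 := fun h => hα0 (inner_self_eq_zero.mp h)
  have h2 : 2 * ⟪α, α⟫ / ⟪α, α⟫ = (2 : ℝ) := by field_simp
  have h := hΦ.reflect_mem α hα α hα
  rwa [h2, show α - (2 : ℝ) • α = -α by rw [two_smul]; abel] at h

lemma RS.add_mem {Φ : Set V} (hΦ : IsRootSystem Φ) {α β : V} (hα : α ∈ Φ) (hβ : β ∈ Φ)
    (h : ⟪α, β⟫ < 0) : α + β ∈ Φ ∪ {0} := by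
  have hα0 : α ≠ 0 := fun h => hΦ.nonzero (h ▸ hα)
  have hβ0 : β ≠ 0 := fun h => hΦ.nonzero (h ▸ hβ)
  have haa : 0 < ⟪α, α⟫ := inner_self_pos' hα0
  have hbb : 0 < ⟪β, β⟫ := inner_self_pos' hβ0
  have hβα : ⟪β, α⟫ < 0 := by rwa [real_inner_comm]
  obtain ⟨n, hn⟩ := hΦ.crystallographic α hα β hβ
  obtain ⟨m, hm⟩ := hΦ.crystallographic β hβ α hα
  have hnneg : n ≤ -1 := by
    have : (n : ℝ) < 0 := by
      rw [← hn]
      exact div_neg_of_neg_of_pos (by linarith) haa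
    have : n < 0 := by exact_mod_cast this
    omega
  have hmneg : m ≤ -1 := by
    have : (m : ℝ) < 0 := by
      rw [← hm]
      exact div_neg_of_neg_of_pos (by linarith) hbb
    have : m < 0 := by exact_mod_cast this
    omega
  have hcs : ⟪β, α⟫ * ⟪β, α⟫ ≤ ⟪α, α⟫ * ⟪β, β⟫ := by
    have := real_inner_mul_inner_self_le β α
    rwa [mul_comm ⟪β, β⟫ ⟪α, α⟫] at this
  have hnm : n * m ≤ 4 := by
    have hprod : ((n * m : ℤ) : ℝ) = (2 * ⟪β, α⟫ / ⟪α, α⟫) * (2 * ⟪α, β⟫ / ⟪β, β⟫) := by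
      push_cast; rw [hn, hm]
    have hle : ((n * m : ℤ) : ℝ) ≤ 4 := by
      rw [hprod, div_mul_div_comm]
      rw [div_le_iff₀ (by positivity)]
      have hsym : ⟪β, α⟫ = ⟪α, β⟫ := real_inner_comm α β
      nlinarith [hcs, hsym]
    exact_mod_cast hle
  by_cases hn1 : n = -1
  · have := hΦ.reflect_mem α hα β hβ
    rw [hn, hn1] at this
    left
    have heq : β - ((-1 : ℤ) : ℝ) • α = α + β := by push_cast; rw [neg_one_smul]; abel
    rwa [heq] at this
  by_cases hm1 : m = -1
  · have := hΦ.reflect_mem β hβ α hα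
    rw [hm, hm1] at this
    left
    have heq : α - ((-1 : ℤ) : ℝ) • β = α + β := by push_cast; rw [neg_one_smul]; abel
    rwa [heq] at this
  -- now n ≤ -2, m ≤ -2, and n*m ≤ 4 forces n = m = -2
  have hn2' : n ≤ -2 := by omega
  have hm2' : m ≤ -2 := by omega
  have hkey : 0 ≤ (n + 2) * (m + 2) := by nlinarith [hn2', hm2']
  have hq : 0 ≤ n * m + 2 * n + 2 * m + 4 := by nlinarith [hkey]
  have hn2 : n = -2 ∧ m = -2 :=
    ⟨le_antisymm hn2' (by linarith), le_antisymm hm2' (by linarith)⟩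
  have hba : ⟪β, α⟫ = -⟪α, α⟫ := by
    have := hn
    rw [hn2.1] at this
    push_cast at this
    field_simp at this
    linarith
  have hab : ⟪α, β⟫ = -⟪β, β⟫ := by
    have := hm
    rw [hn2.2] at this
    push_cast at this
    field_simp at this
    linarith
  right
  have hsym : ⟪β, α⟫ = ⟪α, β⟫ := real_inner_comm α β
  have : ⟪α + β, α + β⟫ = 0 := by
    rw [inner_add_add_self]
    linarith
  simpa using inner_self_eq_zero.mp this

lemma RS.sub_mem {Φ : Set V} (hΦ : IsRootSystem Φ) {γ α : V} (hγ : γ ∈ Φ) (hα : α ∈ Φ)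
    (h : 0 < ⟪γ, α⟫) : γ - α ∈ Φ ∪ {0} := by
  have := RS.add_mem hΦ hγ (RS.neg_mem hΦ hα) (by rw [inner_neg_right]; linarith)
  rwa [← sub_eq_add_neg] at this

lemma inner_list_sum (l : List V) (c : V) :
    ⟪l.sum, c⟫ = (l.map (fun x => ⟪x, c⟫)).sum := by
  induction l with
  | nil => simp
  | cons h t ih => simp [inner_add_left, ih]

lemma list_sum_nonpos' : ∀ (l : List ℝ), (∀ x ∈ l, x ≤ 0) → l.sum ≤ 0
  | [], _ => by simp
  | a :: t, h => by
    simp only [List.sum_cons]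
    have h1 := h a (by simp)
    have h2 := list_sum_nonpos' t (fun x hx => h x (by simp [hx]))
    linarith

lemma RS.reorder_aux {Φ Pos : Set V} (hΦ : IsRootSystem Φ) (hPosΦ : Pos ⊆ Φ)
    (φ : V →ₗ[ℝ] ℝ) (hφ : ∀ x ∈ Pos, 0 < φ x) :
    ∀ (k : ℕ) (L : List V), L.length = k → ∀ a : V, a ∈ Φ ∪ {0} → (∀ x ∈ L, x ∈ Pos) →
      a + L.sum ∈ Φ ∪ {0} →
      ∃ L' : List V, L'.Perm L ∧ ∀ n : ℕ, a + (L'.take n).sum ∈ Φ ∪ {0} := by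
  intro k
  induction k with
  | zero =>
    intro L hL a ha _ _
    exact ⟨[], by simp [List.length_eq_zero_iff.mp hL], fun n => by simpa using ha⟩
  | succ k ih =>
    intro L hL a ha hLPos hsum
    have hLne : L ≠ [] := by intro h; rw [h] at hL; simp at hL
    have hδf : 0 < φ L.sum := by
      rw [map_list_sum]
      refine List.sum_pos _ ?_ (by simpa using hLne)
      intro x hx
      obtain ⟨y, hy, rfl⟩ := List.mem_map.mp hx
      exact hφ y (hLPos y hy)
    have hδ0 : L.sum ≠ 0 := by intro h; rw [h] at hδf; simp at hδf
    have hδδ : 0 < ⟪L.sum, L.sum⟫ := inner_self_pos' hδ0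
    have key : ∃ x ∈ L, 0 < ⟪x, L.sum⟫ := by
      by_contra hc
      push_neg at hc
      have hle : (L.map (fun x => ⟪x, L.sum⟫)).sum ≤ 0 := by
        apply list_sum_nonpos'
        intro x hx
        obtain ⟨y, hy, rfl⟩ := List.mem_map.mp hx
        exact hc y hy
      rw [← inner_list_sum] at hle
      linarith
    obtain ⟨x, hxL, hxδ⟩ := key
    have hxPos := hLPos x hxL
    have hxΦ : x ∈ Φ := hPosΦ hxPos
    set L₂ := L.erase x with hL₂
    have hperm : L.Perm (x :: L₂) := List.perm_cons_erase hxL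
    have hL₂len : L₂.length = k := by
      have := hperm.length_eq
      simp at this
      omega
    have hsum2 : L.sum = x + L₂.sum := by
      rw [hperm.sum_eq, List.sum_cons]
    have hL₂Pos : ∀ y ∈ L₂, y ∈ Pos := fun y hy => hLPos y (List.mem_of_mem_erase hy)
    rcases lt_or_ge ⟪x, a⟫ 0 with hcase | hcase
    · -- x can be added to a
      have haΦ : a ∈ Φ := by
        rcases ha with h | h
        · exact h
        · exfalso; simp only [Set.mem_singleton_iff] at h
          rw [h, inner_zero_right] at hcase; exact lt_irrefl 0 hcase
      have ha' : a + x ∈ Φ ∪ {0} := RS.add_mem hΦ haΦ hxΦ (by rwa [real_inner_comm])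
      have hsum' : (a + x) + L₂.sum ∈ Φ ∪ {0} := by
        have : (a + x) + L₂.sum = a + L.sum := by rw [hsum2]; abel
        rwa [this]
      obtain ⟨L'', hperm'', hps⟩ := ih L₂ hL₂len (a + x) ha' hL₂Pos hsum'
      refine ⟨x :: L'', (hperm''.cons x).trans hperm.symm, ?_⟩
      intro n
      cases n with
      | zero => simpa using ha
      | succ m =>
        have : a + ((x :: L'').take (m + 1)).sum = (a + x) + (L''.take m).sum := by
          simp [List.take_succ_cons]; abel
        rw [this]
        exact hps m
    · -- x can be subtracted from the total sum
      have hγΦ : a + L.sum ∈ Φ := by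
        rcases hsum with h | h
        · exact h
        · exfalso; simp only [Set.mem_singleton_iff] at h
          have : ⟪x, a + L.sum⟫ = 0 := by rw [h, inner_zero_right]
          rw [inner_add_right] at this
          linarith
      have hxγ : 0 < ⟪a + L.sum, x⟫ := by
        rw [real_inner_comm, inner_add_right]
        linarith
      have hsub : (a + L.sum) - x ∈ Φ ∪ {0} := RS.sub_mem hΦ hγΦ hxΦ hxγ
      have heq : a + L₂.sum = (a + L.sum) - x := by rw [hsum2]; abel
      obtain ⟨L'', hperm'', hps⟩ := ih L₂ hL₂len a ha hL₂Pos (by rw [heq]; exact hsub)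
      refine ⟨L'' ++ [x], ((L''.perm_append_singleton x).trans (hperm''.cons x)).trans hperm.symm, ?_⟩
      intro n
      by_cases hn : n ≤ L''.length
      · rw [List.take_append_of_le_length hn]
        exact hps n
      · rw [List.take_of_length_le (by simp; omega)]
        have : a + (L'' ++ [x]).sum = a + L.sum := by
          rw [List.sum_append, hperm''.sum_eq, List.sum_cons]
          simp [hsum2]; abel
        rw [this]
        exact hsum

lemma perm_ofFn_exists {W : Type*} :
    ∀ (l : List W) (k : ℕ) (g : Fin k → W), l.Perm (List.ofFn g) →
      ∃ τ : Equiv.Perm (Fin k), l = List.ofFn (g ∘ τ) := by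
  intro l
  induction l with
  | nil =>
    intro k g h
    have hk : 0 = k := by simpa using h.length_eq
    subst hk
    exact ⟨1, by simp⟩
  | cons a t iht =>
    intro k g h
    have hk : t.length + 1 = k := by simpa using h.length_eq
    subst hk
    obtain ⟨i, hi⟩ : ∃ i, g i = a := by
      have : a ∈ List.ofFn g := h.subset (by simp)
      rw [List.mem_ofFn] at this
      exact Set.mem_range.mp this
    set g' : Fin (t.length + 1) → W := g ∘ (Equiv.swap 0 i) with hg'
    have hperm2 : (List.ofFn g').Perm (List.ofFn g) :=
      Equiv.Perm.ofFn_comp_perm (Equiv.swap 0 i) g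
    have h0 : g' 0 = a := by simp [hg', Equiv.swap_apply_left, hi]
    have hof : List.ofFn g' = a :: List.ofFn (fun j : Fin t.length => g' j.succ) := by
      rw [List.ofFn_succ, h0]
    have ht : t.Perm (List.ofFn (fun j : Fin t.length => g' j.succ)) := by
      have h2 := h.trans hperm2.symm
      rw [hof] at h2
      exact (List.perm_cons a).mp h2
    obtain ⟨τ', hτ'⟩ := iht _ _ ht
    refine ⟨Equiv.Perm.decomposeFin.symm (i, τ'), ?_⟩
    rw [List.ofFn_succ]
    congr 1
    · simp [hi]
    · have hfun : (fun i1 : Fin t.length =>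
          (g ∘ (Equiv.Perm.decomposeFin.symm (i, τ') : Equiv.Perm (Fin (t.length + 1)))) i1.succ)
          = ((fun j : Fin t.length => g' j.succ) ∘ τ') := by
        funext j
        simp [hg', Equiv.Perm.decomposeFin_symm_apply_succ]
      rw [hfun]
      exact hτ'


/-- If `α₁ ∈ Φ ∪ {0}`, `α₂, …, α_k ∈ Φ⁺` and `γ = α₁ + ⋯ + α_k ∈ Φ ∪ {0}`, then the
`αᵢ` with `i ≥ 2` can be reordered so that every partial sum (starting with `α₁`)
lies in `Φ ∪ {0}`. -/
theorem root_sum_reorder (Φ Pos : Set V) (hΦ : IsRootSystem Φ)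
    (hPos : IsPositiveSystem Φ Pos) (k : ℕ) (f : Fin (k + 1) → V)
    (h0 : f 0 ∈ Φ ∪ {0}) (hp : ∀ i : Fin (k + 1), i ≠ 0 → f i ∈ Pos)
    (hγ : (∑ i, f i) ∈ Φ ∪ {0}) :
    ∃ σ : Equiv.Perm (Fin (k + 1)), σ 0 = 0 ∧
      ∀ j : Fin (k + 1),
        (∑ i ∈ Finset.univ.filter (fun i => i ≤ j), f (σ i)) ∈ Φ ∪ {0} := by
  obtain ⟨φ, hφ1, hPosEq⟩ := hPos
  have hPosΦ : Pos ⊆ Φ := by rw [hPosEq]; exact fun x hx => hx.1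
  have hφ : ∀ x ∈ Pos, 0 < φ x := by rw [hPosEq]; exact fun x hx => hx.2
  set g : Fin k → V := fun i => f i.succ with hg
  set L : List V := List.ofFn g with hLdef
  have hLPos : ∀ x ∈ L, x ∈ Pos := by
    intro x hx
    rw [hLdef] at hx
    obtain ⟨i, rfl⟩ := by simpa [List.mem_ofFn] using hx
    exact hp i.succ (Fin.succ_ne_zero i)
  have hLsum : f 0 + L.sum = ∑ i, f i := by
    rw [hLdef, List.sum_ofFn, Fin.sum_univ_succ]
  obtain ⟨L', hperm', hps⟩ := RS.reorder_aux hΦ hPosΦ φ hφ k L (by simp [hLdef]) (f 0) h0 hLPos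
    (by rw [hLsum]; exact hγ)
  obtain ⟨τ, hτ⟩ := perm_ofFn_exists L' k g hperm'
  refine ⟨Equiv.Perm.decomposeFin.symm (0, τ), by simp, ?_⟩
  intro j
  have hσ0 : (Equiv.Perm.decomposeFin.symm (0, τ) : Equiv.Perm (Fin (k+1))) 0 = 0 := by simp
  have hσs : ∀ i' : Fin k,
      (Equiv.Perm.decomposeFin.symm (0, τ) : Equiv.Perm (Fin (k+1))) i'.succ = (τ i').succ := by
    intro i'; simp [Equiv.Perm.decomposeFin_symm_apply_succ]
  have hsum : (∑ i ∈ Finset.univ.filter (fun i => i ≤ j),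
      f (Equiv.Perm.decomposeFin.symm (0, τ) i)) = f 0 + (L'.take (j : ℕ)).sum := by
    rw [Finset.sum_filter, Fin.sum_univ_succ, if_pos (Fin.zero_le j), hσ0]
    congr 1
    rw [hτ, List.sum_take_ofFn, Finset.sum_filter]
    apply Finset.sum_congr rfl
    intro i' _
    rw [hσs i']
    have hiff : i'.succ ≤ j ↔ ((i' : ℕ) < (j : ℕ)) := by
      rw [Fin.le_def, Fin.val_succ, Nat.lt_iff_add_one_le]
    simp only [hiff]
    rfl
  rw [hsum]
  exact hps (j : ℕ)
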